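/- For integers 1 ≤ r ≤ t < n, the damping factor λ_{n,t,r} = √(∏_{j=0}^{r-1} ((t-j)(n+j+2))/((n-j)(t+j+2))) satisfies λ_{n,t,r} ≤ exp(−(n−t)·r·(r+1) / (2n(t+r+1))). -/

import Mathlib

/-- `λ_{n,t,r}² := ∏_{j<r} ((t-j)(n+j+2))/((n-j)(t+j+2))`. -/
noncomputable def lamSq (n t r : ℕ) : ℝ :=
  ∏ j ∈ Finset.range r,
    (((t : ℝ) - j) * ((n : ℝ) + j + 2)) / ((((n : ℝ) - j)) * ((t : ℝ) + j + 2))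

lemma sum_range_add_one (r : ℕ) :
    ∑ j ∈ Finset.range r, ((j : ℝ) + 1) = r * (r + 1) / 2 := by
  induction r with
  | zero => simp
  | succ k ih =>
      rw [Finset.sum_range_succ, ih]
      push_cast
      ring

lemma sqrt_exp' (x : ℝ) : Real.sqrt (Real.exp x) = Real.exp (x / 2) := by
  rw [show Real.exp x = (Real.exp (x / 2)) ^ 2 by
        rw [sq, ← Real.exp_add]; ring_nf]
  exact Real.sqrt_sq (Real.exp_pos _).le

/-- Damping bound: for `1 ≤ r ≤ t < n`,
`λ_{n,t,r} ≤ exp(-(n-t)·r·(r+1)/(2n(t+r+1)))`. -/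
theorem lambda_damping_bound (n t r : ℕ) (hr : 1 ≤ r) (hrt : r ≤ t) (htn : t < n) :
    Real.sqrt (lamSq n t r)
      ≤ Real.exp (-(((n : ℝ) - t) * r * (r + 1)) / (2 * n * ((t : ℝ) + r + 1))) := by
  have hn0 : (0 : ℝ) < n := by
    have : 0 < n := lt_of_le_of_lt (Nat.zero_le t) htn
    exact_mod_cast this
  have htr1 : (0 : ℝ) < (t : ℝ) + r + 1 := by positivity
  have hnt : (0 : ℝ) ≤ (n : ℝ) - t := by
    have : (t : ℝ) ≤ n := by exact_mod_cast htn.le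
    linarith
  set D : ℝ := (n : ℝ) * ((t : ℝ) + r + 1) with hD
  have hD0 : (0 : ℝ) < D := by positivity
  -- bound for each factor
  have key : lamSq n t r ≤ Real.exp (-(((n : ℝ) - t) * r * (r + 1)) / D) := by
    have hle : lamSq n t r ≤
        ∏ j ∈ Finset.range r,
          Real.exp (-(2 * ((n : ℝ) - t) * ((j : ℝ) + 1) / D)) := by
      apply Finset.prod_le_prod
      · intro j hj
        have hj' : j < r := Finset.mem_range.mp hj
        have h1 : (0 : ℝ) ≤ (t : ℝ) - j := by
          have : (j : ℝ) < t := by exact_mod_cast lt_of_lt_of_le hj' hrt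
          linarith
        have h2 : (0 : ℝ) < (n : ℝ) - j := by
          have : (j : ℝ) < n := by
            exact_mod_cast lt_of_lt_of_le hj' (le_trans hrt htn.le)
          linarith
        positivity
      · intro j hj
        have hj' : j < r := Finset.mem_range.mp hj
        have hjt : (j : ℝ) < t := by exact_mod_cast lt_of_lt_of_le hj' hrt
        have hjn : (j : ℝ) < n := by
          exact_mod_cast lt_of_lt_of_le hj' (le_trans hrt htn.le)
        have hjr : (j : ℝ) + 1 ≤ r := by exact_mod_cast hj'
        have hd1 : (0 : ℝ) < (n : ℝ) - j := by linarith
        have hd2 : (0 : ℝ) < (t : ℝ) + j + 2 := by positivity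
        set ε : ℝ := 2 * ((n : ℝ) - t) * ((j : ℝ) + 1) / (((n : ℝ) - j) * ((t : ℝ) + j + 2))
          with hε
        have hfac : (((t : ℝ) - j) * ((n : ℝ) + j + 2)) / ((((n : ℝ) - j)) * ((t : ℝ) + j + 2))
            = 1 - ε := by
          rw [hε]
          field_simp
          ring
        have hstep1 : (((t : ℝ) - j) * ((n : ℝ) + j + 2)) / ((((n : ℝ) - j)) * ((t : ℝ) + j + 2))
            ≤ Real.exp (-ε) := by
          rw [hfac]
          have := Real.add_one_le_exp (-ε)
          linarith
        refine hstep1.trans (Real.exp_le_exp.mpr ?_)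
        rw [neg_le_neg_iff, hε, hD]
        have hden : ((n : ℝ) - j) * ((t : ℝ) + j + 2) ≤ (n : ℝ) * ((t : ℝ) + r + 1) := by
          have h1 : (n : ℝ) - j ≤ n := by
            have : (0 : ℝ) ≤ (j : ℝ) := Nat.cast_nonneg j
            linarith
          have h2 : (t : ℝ) + j + 2 ≤ (t : ℝ) + r + 1 := by linarith
          exact mul_le_mul h1 h2 hd2.le hn0.le
        gcongr
    refine hle.trans (le_of_eq ?_)
    rw [← Real.exp_sum]
    congr 1
    have h2 : ∑ j ∈ Finset.range r, -(2 * ((n : ℝ) - t) * ((j : ℝ) + 1) / D)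
        = (-(2 * ((n : ℝ) - t) / D)) * ∑ j ∈ Finset.range r, ((j : ℝ) + 1) := by
      rw [Finset.mul_sum]
      exact Finset.sum_congr rfl fun j _ => by ring
    rw [h2, sum_range_add_one]
    have h1 : (n : ℝ) ≠ 0 := hn0.ne'
    have h2' : (t : ℝ) + r + 1 ≠ 0 := htr1.ne'
    rw [hD]
    field_simp
  calc Real.sqrt (lamSq n t r)
      ≤ Real.sqrt (Real.exp (-(((n : ℝ) - t) * r * (r + 1)) / D)) := Real.sqrt_le_sqrt key
    _ = Real.exp ((-(((n : ℝ) - t) * r * (r + 1)) / D) / 2) := sqrt_exp' _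
    _ = Real.exp (-(((n : ℝ) - t) * r * (r + 1)) / (2 * n * ((t : ℝ) + r + 1))) := by
        congr 1
        rw [hD]
        have h1 : (n : ℝ) ≠ 0 := hn0.ne'
        have h2 : (t : ℝ) + r + 1 ≠ 0 := htr1.ne'
        field_simp
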